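/- Let λ ∈ (0,1], λ' ∈ [0,1) with λ > λ', and define φ : M₂(ℂ) → M₂(ℂ) by φ(A) = diag(λa₁₁ + (1−λ)a₂₂, λ'a₁₁ + (1−λ')a₂₂). Set Q = λ − λ'. Then for every t > 0, I + tφ is invertible and tφ(I + tφ)^{-1}(A) = μ₁(A)e₁₁ + μ₂(A)e₂₂, where μ₁ = t((λ + tQ)ν₁ + (1−λ)ν₂)/D_t and μ₂ = t(λ'ν₁ + (1−λ'+tQ)ν₂)/D_t with νⱼ(A) = a_{jj} and D_t = 1 + t(1+Q) + t²Q. In particular μ₁ and μ₂ are positive linear functionals, so φ is q-positive. -/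

import Mathlib

open Matrix Filter
open scoped Matrix.Norms.L2Operator ComplexOrder

noncomputable section

def IsCompletelyPositive {n : Type*} [Fintype n] [DecidableEq n]
    (φ : Matrix n n ℂ →ₗ[ℂ] Matrix n n ℂ) : Prop :=
  ∀ (k : ℕ) (A : Matrix (Fin k × n) (Fin k × n) ℂ), A.PosSemidef →
    Matrix.PosSemidef (Matrix.of fun p q : Fin k × n =>
      φ (Matrix.of fun a b => A (p.1, a) (q.1, b)) p.2 q.2)

def Inv2 {n : Type*} [Fintype n] [DecidableEq n]
    (f g : Matrix n n ℂ →ₗ[ℂ] Matrix n n ℂ) : Prop :=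
  f ∘ₗ g = LinearMap.id ∧ g ∘ₗ f = LinearMap.id

def QPositive {n : Type*} [Fintype n] [DecidableEq n]
    (φ : Matrix n n ℂ →ₗ[ℂ] Matrix n n ℂ) : Prop :=
  (∀ c : ℝ, c < 0 → ¬ Module.End.HasEigenvalue φ (c : ℂ)) ∧
  ∀ t : ℝ, 0 ≤ t → ∃ ψ, Inv2 (LinearMap.id + (t : ℂ) • φ) ψ ∧
    IsCompletelyPositive (φ ∘ₗ ψ)

def toC {n : Type*} [Fintype n] [DecidableEq n]
    (φ : Matrix n n ℂ →ₗ[ℂ] Matrix n n ℂ) : Matrix n n ℂ →L[ℂ] Matrix n n ℂ :=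
  LinearMap.toContinuousLinearMap φ

def conjMap {n : Type*} [Fintype n] [DecidableEq n]
    (φ : Matrix n n ℂ →ₗ[ℂ] Matrix n n ℂ) (U : Matrix n n ℂ) :
    Matrix n n ℂ →ₗ[ℂ] Matrix n n ℂ where
  toFun A := Uᴴ * φ (U * A * Uᴴ) * U
  map_add' A B := by simp [Matrix.mul_add, Matrix.add_mul]
  map_smul' c A := by simp [Matrix.mul_smul, Matrix.smul_mul]

/-- Schur (Hadamard) multiplication by a fixed matrix, as a linear map. -/
def schurMap {n : Type*} [Fintype n] [DecidableEq n] (M : Matrix n n ℂ) :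
    Matrix n n ℂ →ₗ[ℂ] Matrix n n ℂ where
  toFun A := Matrix.of fun i j => M i j * A i j
  map_add' A B := by ext i j; simp [Matrix.add_apply]; ring
  map_smul' c A := by ext i j; simp [Matrix.smul_apply]; ring

/-- A state on `Mₙ(ℂ)`. -/
def IsState {n : Type*} [Fintype n] [DecidableEq n]
    (ρ : Matrix n n ℂ →ₗ[ℂ] ℂ) : Prop :=
  ρ 1 = 1 ∧ ∀ A, A.PosSemidef → ∃ r : ℝ, 0 ≤ r ∧ ρ A = (r : ℂ)

def IsProjection {n : Type*} [Fintype n] [DecidableEq n] (P : Matrix n n ℂ) : Prop :=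
  P.IsHermitian ∧ P * P = P

/-- φ ≥_q ψ. -/
def QSub {n : Type*} [Fintype n] [DecidableEq n]
    (φ ψ : Matrix n n ℂ →ₗ[ℂ] Matrix n n ℂ) : Prop :=
  ∀ t : ℝ, 0 ≤ t → ∀ χ₁ χ₂, Inv2 (LinearMap.id + (t : ℂ) • φ) χ₁ →
    Inv2 (LinearMap.id + (t : ℂ) • ψ) χ₂ →
    IsCompletelyPositive (φ ∘ₗ χ₁ - ψ ∘ₗ χ₂)

def QPure {n : Type*} [Fintype n] [DecidableEq n]
    (φ : Matrix n n ℂ →ₗ[ℂ] Matrix n n ℂ) : Prop :=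
  QPositive φ ∧ ∀ ψ, QPositive ψ → QSub φ ψ →
    (ψ = 0 ∨ ∃ s : ℝ, 0 ≤ s ∧ ∀ χ, Inv2 (LinearMap.id + (s : ℂ) • φ) χ → ψ = φ ∘ₗ χ)

/-- The block map `[[A,B],[C,D]] ↦ [[φ(A), σ(B)],[σ*(C), Ψ(D)]]`. -/
def cornerMap {n k : Type*} [Fintype n] [Fintype k] [DecidableEq n] [DecidableEq k]
    (φ : Matrix n n ℂ →ₗ[ℂ] Matrix n n ℂ) (Ψ : Matrix k k ℂ →ₗ[ℂ] Matrix k k ℂ)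
    (σ : Matrix n k ℂ →ₗ[ℂ] Matrix n k ℂ) :
    Matrix (n ⊕ k) (n ⊕ k) ℂ →ₗ[ℂ] Matrix (n ⊕ k) (n ⊕ k) ℂ where
  toFun M := Matrix.fromBlocks (φ M.toBlocks₁₁) (σ M.toBlocks₁₂)
      ((σ (M.toBlocks₂₁)ᴴ)ᴴ) (Ψ M.toBlocks₂₂)
  map_add' M N := by
    have h11 : (M + N).toBlocks₁₁ = M.toBlocks₁₁ + N.toBlocks₁₁ := rfl
    have h12 : (M + N).toBlocks₁₂ = M.toBlocks₁₂ + N.toBlocks₁₂ := rfl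
    have h21 : (M + N).toBlocks₂₁ = M.toBlocks₂₁ + N.toBlocks₂₁ := rfl
    have h22 : (M + N).toBlocks₂₂ = M.toBlocks₂₂ + N.toBlocks₂₂ := rfl
    simp only [h11, h12, h21, h22, map_add, conjTranspose_add, Matrix.fromBlocks_add]
  map_smul' c M := by
    have h11 : (c • M).toBlocks₁₁ = c • M.toBlocks₁₁ := rfl
    have h12 : (c • M).toBlocks₁₂ = c • M.toBlocks₁₂ := rfl
    have h21 : (c • M).toBlocks₂₁ = c • M.toBlocks₂₁ := rfl
    have h22 : (c • M).toBlocks₂₂ = c • M.toBlocks₂₂ := rfl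
    simp only [h11, h12, h21, h22, RingHom.id_apply, _root_.map_smul,
      conjTranspose_smul, star_star, Matrix.fromBlocks_smul]

/-- The diagonal-part map on `M₂(ℂ)`. -/
def diagMap : Matrix (Fin 2) (Fin 2) ℂ →ₗ[ℂ] Matrix (Fin 2) (Fin 2) ℂ where
  toFun A := Matrix.diagonal fun i => A i i
  map_add' A B := by ext i j; by_cases h : i = j <;> simp [Matrix.diagonal, h]
  map_smul' c A := by ext i j; by_cases h : i = j <;> simp [Matrix.diagonal, h]

/-- The map `A ↦ diag(λa₁₁ + (1-λ)a₂₂, λ'a₁₁ + (1-λ')a₂₂)`. -/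
def phiD (l l' : ℝ) : Matrix (Fin 2) (Fin 2) ℂ →ₗ[ℂ] Matrix (Fin 2) (Fin 2) ℂ where
  toFun A := Matrix.diagonal
    ![(l : ℂ) * A 0 0 + (1 - (l : ℂ)) * A 1 1,
      (l' : ℂ) * A 0 0 + (1 - (l' : ℂ)) * A 1 1]
  map_add' A B := by
    ext i j
    fin_cases i <;> fin_cases j <;>
      simp [Matrix.diagonal, Matrix.add_apply] <;> ring
  map_smul' c A := by
    ext i j
    fin_cases i <;> fin_cases j <;>
      simp [Matrix.diagonal, Matrix.smul_apply] <;> ring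

def genMap (a b c d : ℂ) : Matrix (Fin 2) (Fin 2) ℂ →ₗ[ℂ] Matrix (Fin 2) (Fin 2) ℂ where
  toFun A := Matrix.diagonal ![a * A 0 0 + b * A 1 1, c * A 0 0 + d * A 1 1]
  map_add' A B := by
    ext i j
    fin_cases i <;> fin_cases j <;>
      simp [Matrix.diagonal, Matrix.add_apply] <;> ring
  map_smul' c A := by
    ext i j
    fin_cases i <;> fin_cases j <;>
      simp [Matrix.diagonal, Matrix.smul_apply] <;> ring

lemma genCP (a b c d : ℝ) (ha : 0 ≤ a) (hb : 0 ≤ b) (hc : 0 ≤ c) (hd : 0 ≤ d) :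
    IsCompletelyPositive (genMap a b c d) := by
  intro k A hA
  set co : Fin 2 → Fin 2 → ℝ := ![![a, b], ![c, d]] with hco_def
  have hco : ∀ i j, 0 ≤ co i j := by
    intro i j; fin_cases i <;> fin_cases j <;> simpa [co]
  set V : Fin 2 → Fin 2 → Matrix (Fin k × Fin 2) (Fin k × Fin 2) ℂ :=
    fun i j => Matrix.of fun p q =>
      if p.1 = q.1 ∧ p.2 = j ∧ q.2 = i then ((Real.sqrt (co i j) : ℝ) : ℂ) else 0
    with hV
  have key : (Matrix.of fun p q : Fin k × Fin 2 =>
      genMap a b c d (Matrix.of fun a' b' => A (p.1, a') (q.1, b')) p.2 q.2)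
      = (V 0 0)ᴴ * A * (V 0 0) + (V 0 1)ᴴ * A * (V 0 1)
        + (V 1 0)ᴴ * A * (V 1 0) + (V 1 1)ᴴ * A * (V 1 1) := by
    ext ⟨p1, p2⟩ ⟨q1, q2⟩
    have hss : ∀ i j : Fin 2, ((Real.sqrt (co i j) : ℝ) : ℂ) * ((Real.sqrt (co i j) : ℝ) : ℂ)
        = ((co i j : ℝ) : ℂ) := by
      intro i j
      rw [← Complex.ofReal_mul, Real.mul_self_sqrt (hco i j)]
    fin_cases p2 <;> fin_cases q2 <;>
      simp [genMap, V, Matrix.mul_apply, Matrix.add_apply, Fintype.sum_prod_type,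
        Fin.sum_univ_two, Matrix.diagonal, Finset.mul_sum, Finset.sum_mul,
        apply_ite (starRingEnd ℂ), Complex.conj_ofReal, ite_mul, mul_ite,
        Finset.sum_ite_eq, Finset.sum_ite_eq',
        mul_comm, mul_left_comm, hss, co, ← Complex.ofReal_mul, Real.mul_self_sqrt ha,
        Real.mul_self_sqrt hb, Real.mul_self_sqrt hc, Real.mul_self_sqrt hd]
  rw [key]
  exact (((hA.conjTranspose_mul_mul_same _).add (hA.conjTranspose_mul_mul_same _)).add
    (hA.conjTranspose_mul_mul_same _)).add (hA.conjTranspose_mul_mul_same _)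

def Dc (l l' t : ℝ) : ℂ :=
  1 + (t : ℂ) * (1 + ((l : ℂ) - (l' : ℂ))) + (t : ℂ) ^ 2 * ((l : ℂ) - (l' : ℂ))

lemma Dr_pos (l l' t : ℝ) (ht : 0 ≤ t) (hQ : 0 < l - l') :
    0 < 1 + t * (1 + (l - l')) + t ^ 2 * (l - l') := by nlinarith

lemma Dc_eq (l l' t : ℝ) :
    Dc l l' t = ((1 + t * (1 + (l - l')) + t ^ 2 * (l - l') : ℝ) : ℂ) := by
  unfold Dc; push_cast; ring

lemma Dc_ne (l l' t : ℝ) (ht : 0 ≤ t) (hQ : 0 < l - l') : Dc l l' t ≠ 0 := by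
  rw [Dc_eq]
  exact_mod_cast (Dr_pos l l' t ht hQ).ne'

def psiD (l l' t : ℝ) : Matrix (Fin 2) (Fin 2) ℂ →ₗ[ℂ] Matrix (Fin 2) (Fin 2) ℂ :=
  LinearMap.id - diagMap +
    genMap ((1 + (t : ℂ) * (1 - (l' : ℂ))) / Dc l l' t)
      (-((t : ℂ) * (1 - (l : ℂ))) / Dc l l' t)
      (-((t : ℂ) * (l' : ℂ)) / Dc l l' t)
      ((1 + (t : ℂ) * (l : ℂ)) / Dc l l' t)

set_option maxHeartbeats 2000000 in
lemma inv2_psiD (l l' t : ℝ) (ht : 0 ≤ t) (hQ : 0 < l - l') :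
    Inv2 (LinearMap.id + (t : ℂ) • phiD l l') (psiD l l' t) := by
  have hD : Dc l l' t ≠ 0 := Dc_ne l l' t ht hQ
  constructor <;>
  · apply LinearMap.ext; intro A
    ext i j
    fin_cases i <;> fin_cases j <;>
      simp [psiD, genMap, phiD, diagMap, Matrix.diagonal, LinearMap.add_apply,
        LinearMap.sub_apply, Matrix.add_apply, Matrix.sub_apply, Matrix.smul_apply,
        smul_eq_mul] <;>
      field_simp <;> simp only [Dc] <;> ring

lemma phiD_eq_genMap (l l' : ℝ) :
    phiD l l' = genMap ((l : ℝ) : ℂ) (((1 - l : ℝ)) : ℂ) ((l' : ℝ) : ℂ) (((1 - l' : ℝ)) : ℂ) := by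
  apply LinearMap.ext; intro A
  ext i j
  fin_cases i <;> fin_cases j <;>
    simp [phiD, genMap, Matrix.diagonal] <;> push_cast <;> ring

set_option maxHeartbeats 2000000 in
lemma comp_eq_genMap (l l' t : ℝ) (ht : 0 ≤ t) (hQ : 0 < l - l') :
    phiD l l' ∘ₗ psiD l l' t =
      genMap (((l : ℂ) + (t : ℂ) * ((l : ℂ) - (l' : ℂ))) / Dc l l' t)
        ((1 - (l : ℂ)) / Dc l l' t)
        ((l' : ℂ) / Dc l l' t)
        ((1 - (l' : ℂ) + (t : ℂ) * ((l : ℂ) - (l' : ℂ))) / Dc l l' t) := by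
  have hD : Dc l l' t ≠ 0 := Dc_ne l l' t ht hQ
  apply LinearMap.ext; intro A
  ext i j
  fin_cases i <;> fin_cases j <;>
    simp [psiD, genMap, phiD, diagMap, Matrix.diagonal, LinearMap.sub_apply,
      LinearMap.add_apply, Matrix.add_apply, Matrix.sub_apply] <;>
    field_simp <;> ring

lemma coeff_cast (z : ℂ) (y : ℝ) (l l' t : ℝ) (h : z = (y : ℂ)) :
    z / Dc l l' t = ((y / (1 + t * (1 + (l - l')) + t ^ 2 * (l - l')) : ℝ) : ℂ) := by
  rw [h, Dc_eq]; norm_cast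

lemma psd_diag {n : Type*} [Fintype n] [DecidableEq n] {A : Matrix n n ℂ}
    (hA : A.PosSemidef) (i : n) : 0 ≤ A i i := by
  exact hA.diag_nonneg

lemma psd_diag_real {n : Type*} [Fintype n] [DecidableEq n] {A : Matrix n n ℂ}
    (hA : A.PosSemidef) (i : n) : ∃ r : ℝ, 0 ≤ r ∧ A i i = (r : ℂ) := by
  have h := psd_diag hA i
  rw [Complex.nonneg_iff] at h
  exact ⟨(A i i).re, h.1, by
    apply Complex.ext <;> simp [← h.2]⟩

lemma no_neg_eigen (l l' : ℝ) (hQ : 0 < l - l') :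
    ∀ c : ℝ, c < 0 → ¬ Module.End.HasEigenvalue (phiD l l') (c : ℂ) := by
  intro c hc h
  obtain ⟨v, hv⟩ := h.exists_hasEigenvector
  have heq : phiD l l' v = (c : ℂ) • v := hv.apply_eq_smul
  have hvne : v ≠ 0 := hv.right
  have hcne : (c : ℂ) ≠ 0 := by exact_mod_cast hc.ne
  have e : ∀ i j, phiD l l' v i j = (c : ℂ) * v i j := by
    intro i j; rw [heq]; simp
  have hdet : ((1 : ℂ) - c) * (((l : ℂ) - l') - c) ≠ 0 := by
    have hpos : (0:ℝ) < (1 - c) * ((l - l') - c) := by nlinarith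
    have hcast : ((1 : ℂ) - c) * (((l : ℂ) - l') - c)
        = (((1 - c) * ((l - l') - c) : ℝ) : ℂ) := by push_cast; ring
    rw [hcast]
    exact_mod_cast hpos.ne'
  have e00 := e 0 0
  have e11 := e 1 1
  have e01 := e 0 1
  have e10 := e 1 0
  simp [phiD, Matrix.diagonal] at e00 e11 e01 e10
  have h00 : v 0 0 = 0 := by
    have hz : (((1 : ℂ) - c) * (((l : ℂ) - l') - c)) * v 0 0 = 0 := by
      linear_combination (1 - (l' : ℂ) - (c : ℂ)) * e00 - (1 - (l : ℂ)) * e11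
    exact (mul_eq_zero.mp hz).resolve_left hdet
  have h11 : v 1 1 = 0 := by
    have hz : (((1 : ℂ) - c) * (((l : ℂ) - l') - c)) * v 1 1 = 0 := by
      linear_combination ((l : ℂ) - (c : ℂ)) * e11 - (l' : ℂ) * e00
    exact (mul_eq_zero.mp hz).resolve_left hdet
  apply hvne
  ext i j
  fin_cases i <;> fin_cases j
  · simpa using h00
  · simpa using e01.resolve_left hc.ne
  · simpa using e10.resolve_left hc.ne
  · simpa using h11


/-- explicit resolvent formula for `phiD` and its q-positivity. -/
theorem stmt_13 (l l' : ℝ) (hl : l ∈ Set.Ioc (0 : ℝ) 1)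
    (hl' : l' ∈ Set.Ico (0 : ℝ) 1) (hll : l' < l) :
    (∀ t : ℝ, 0 < t → ∃ ψ, Inv2 (LinearMap.id + (t : ℂ) • phiD l l') ψ) ∧
    (∀ t : ℝ, 0 < t → ∀ ψ, Inv2 (LinearMap.id + (t : ℂ) • phiD l l') ψ →
      ∀ A : Matrix (Fin 2) (Fin 2) ℂ,
        ((t : ℂ) • (phiD l l' ∘ₗ ψ)) A = Matrix.diagonal
          ![(t : ℂ) * (((l : ℂ) + (t : ℂ) * ((l : ℂ) - (l' : ℂ))) * A 0 0 +
              (1 - (l : ℂ)) * A 1 1) /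
              (1 + (t : ℂ) * (1 + ((l : ℂ) - (l' : ℂ))) +
                (t : ℂ) ^ 2 * ((l : ℂ) - (l' : ℂ))),
            (t : ℂ) * ((l' : ℂ) * A 0 0 +
              (1 - (l' : ℂ) + (t : ℂ) * ((l : ℂ) - (l' : ℂ))) * A 1 1) /
              (1 + (t : ℂ) * (1 + ((l : ℂ) - (l' : ℂ))) +
                (t : ℂ) ^ 2 * ((l : ℂ) - (l' : ℂ)))]) ∧
    (∀ t : ℝ, 0 < t → ∀ A : Matrix (Fin 2) (Fin 2) ℂ, A.PosSemidef →
      (∃ r : ℝ, 0 ≤ r ∧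
        (t : ℂ) * (((l : ℂ) + (t : ℂ) * ((l : ℂ) - (l' : ℂ))) * A 0 0 +
          (1 - (l : ℂ)) * A 1 1) /
          (1 + (t : ℂ) * (1 + ((l : ℂ) - (l' : ℂ))) +
            (t : ℂ) ^ 2 * ((l : ℂ) - (l' : ℂ))) = (r : ℂ)) ∧
      (∃ r : ℝ, 0 ≤ r ∧
        (t : ℂ) * ((l' : ℂ) * A 0 0 +
          (1 - (l' : ℂ) + (t : ℂ) * ((l : ℂ) - (l' : ℂ))) * A 1 1) /
          (1 + (t : ℂ) * (1 + ((l : ℂ) - (l' : ℂ))) +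
            (t : ℂ) ^ 2 * ((l : ℂ) - (l' : ℂ))) = (r : ℂ))) ∧
    QPositive (phiD l l') := by
  obtain ⟨hl0, hl1⟩ := hl
  obtain ⟨hl'0, hl'1⟩ := hl'
  have hQ : 0 < l - l' := sub_pos.2 hll
  refine ⟨?_, ?_, ?_, ?_, ?_⟩
  · exact fun t ht => ⟨psiD l l' t, inv2_psiD l l' t ht.le hQ⟩
  · intro t ht ψ hψ A
    have huniq : ψ = psiD l l' t := by
      obtain ⟨h1, h2⟩ := hψ
      obtain ⟨g1, g2⟩ := inv2_psiD l l' t ht.le hQ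
      calc ψ = LinearMap.id ∘ₗ ψ := (LinearMap.id_comp ψ).symm
        _ = (psiD l l' t ∘ₗ (LinearMap.id + (t : ℂ) • phiD l l')) ∘ₗ ψ := by rw [g2]
        _ = psiD l l' t ∘ₗ ((LinearMap.id + (t : ℂ) • phiD l l') ∘ₗ ψ) := by
            rw [LinearMap.comp_assoc]
        _ = psiD l l' t := by rw [h1, LinearMap.comp_id]
    subst huniq
    rw [comp_eq_genMap l l' t ht.le hQ]
    ext i j
    fin_cases i <;> fin_cases j <;>
      simp [genMap, Matrix.diagonal, Matrix.smul_apply, smul_eq_mul, Dc] <;> ring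
  · intro t ht A hA
    obtain ⟨x, hx0, hx⟩ := psd_diag_real hA 0
    obtain ⟨y, hy0, hy⟩ := psd_diag_real hA 1
    have hDr := Dr_pos l l' t ht.le hQ
    have hn1 : 0 ≤ l + t * (l - l') := by nlinarith
    have hn2 : 0 ≤ 1 - l := by linarith
    have hn3 : 0 ≤ 1 - l' + t * (l - l') := by nlinarith
    constructor
    · refine ⟨t * ((l + t * (l - l')) * x + (1 - l) * y) /
        (1 + t * (1 + (l - l')) + t ^ 2 * (l - l')), ?_, ?_⟩
      · exact div_nonneg (mul_nonneg ht.le (add_nonneg (mul_nonneg hn1 hx0)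
          (mul_nonneg hn2 hy0))) hDr.le
      · rw [hx, hy]; push_cast; ring
    · refine ⟨t * (l' * x + (1 - l' + t * (l - l')) * y) /
        (1 + t * (1 + (l - l')) + t ^ 2 * (l - l')), ?_, ?_⟩
      · exact div_nonneg (mul_nonneg ht.le (add_nonneg (mul_nonneg hl'0 hx0)
          (mul_nonneg hn3 hy0))) hDr.le
      · rw [hx, hy]; push_cast; ring
  · exact no_neg_eigen l l' hQ
  · intro t ht
    rcases ht.eq_or_lt with rfl | htpos
    · refine ⟨LinearMap.id, ⟨by simp, by simp⟩, ?_⟩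
      rw [LinearMap.comp_id, phiD_eq_genMap]
      exact genCP l (1 - l) l' (1 - l') hl0.le (by linarith) hl'0 (by linarith)
    · refine ⟨psiD l l' t, inv2_psiD l l' t ht hQ, ?_⟩
      rw [comp_eq_genMap l l' t ht hQ,
        coeff_cast _ (l + t * (l - l')) l l' t (by push_cast; ring),
        coeff_cast _ (1 - l) l l' t (by push_cast; ring),
        coeff_cast _ l' l l' t (by push_cast; ring),
        coeff_cast _ (1 - l' + t * (l - l')) l l' t (by push_cast; ring)]
      have hDr := Dr_pos l l' t ht hQ
      have hn1 : 0 ≤ l + t * (l - l') := by nlinarith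
      have hn3 : 0 ≤ 1 - l' + t * (l - l') := by nlinarith
      exact genCP _ _ _ _ (div_nonneg hn1 hDr.le)
        (div_nonneg (by linarith) hDr.le) (div_nonneg hl'0 hDr.le)
        (div_nonneg hn3 hDr.le)
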